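/- Let ≻ be a rotund preference relation on a compact subset X of ℝⁿ. Then the map Γ sending each nonempty compact convex subset S of X to its unique ≻-maximal element is continuous with respect to the Hausdorff metric: for each such S with maximal element ξ and each ε > 0, there is δ > 0 such that every nonempty compact convex S' ⊆ X with ρ_H(S, S') < δ has its maximal element ξ' satisfying ‖ξ − ξ'‖ ≤ ε. -/

import Mathlib

open Set Metric in
/-- If `≻` is a rotund preference relation on a compact `X ⊆ ℝⁿ`, then the map sending a
nonempty compact convex subset of `X` to its `≻`-maximal element is continuous for the
Hausdorff metric. -/
theorem stmt_11 {n : ℕ} (X : Set (EuclideanSpace ℝ (Fin n))) (hXcomp : IsCompact X)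
    (r : EuclideanSpace ℝ (Fin n) → EuclideanSpace ℝ (Fin n) → Prop)
    (asymm : ∀ x ∈ X, ∀ y ∈ X, r x y → ¬ r y x)
    (negtrans : ∀ x ∈ X, ∀ y ∈ X, r x y → ∀ z ∈ X, r x z ∨ r z y)
    (hXrot : ∀ x ∈ X, ∀ ε > (0:ℝ), ∃ δ > (0:ℝ), ∀ x' ∈ X, ε ≤ ‖x - x'‖ →
      ball ((1/2 : ℝ) • (x + x')) δ ⊆ X)
    (hrot : ∀ x ∈ X, ∀ ε > (0:ℝ), ∃ δ > (0:ℝ), ∀ x' ∈ X, ε ≤ ‖x - x'‖ →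
      ∀ z : EuclideanSpace ℝ (Fin n), ‖z‖ < δ →
        r ((1/2 : ℝ) • (x + x') + z) x ∨ r ((1/2 : ℝ) • (x + x') + z) x') :
    ∀ S : Set (EuclideanSpace ℝ (Fin n)), S ⊆ X → S.Nonempty → IsCompact S → Convex ℝ S →
      ∀ ξ ∈ S, (∀ x ∈ S, ¬ r x ξ) → ∀ ε > (0:ℝ), ∃ δ > (0:ℝ),
        ∀ S' : Set (EuclideanSpace ℝ (Fin n)),
          S' ⊆ X → S'.Nonempty → IsCompact S' → Convex ℝ S' →
          hausdorffDist S S' < δ →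
          ∀ ξ' ∈ S', (∀ x ∈ S', ¬ r x ξ') → ‖ξ - ξ'‖ ≤ ε := by
  intro S hSX hSne hScomp hSconv ξ hξS hξmax ε hε
  obtain ⟨δ₁, hδ₁pos, hδ₁⟩ := hrot ξ (hSX hξS) ε hε
  refine ⟨δ₁, hδ₁pos, ?_⟩
  intro S' hS'X hS'ne hS'comp hS'conv hH ξ' hξ'S' hξ'max
  by_contra hcon
  push_neg at hcon
  have hεξ : ε ≤ ‖ξ - ξ'‖ := le_of_lt hcon
  have hξ'X : ξ' ∈ X := hS'X hξ'S'
  have hedist : EMetric.hausdorffEdist S S' ≠ ⊤ :=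
    hausdorffEdist_ne_top_of_nonempty_of_bounded hSne hS'ne hScomp.isBounded
      hS'comp.isBounded
  obtain ⟨s', hs'S', hs'd⟩ := exists_dist_lt_of_hausdorffDist_lt hξS hH hedist
  obtain ⟨s, hsS, hsd⟩ := exists_dist_lt_of_hausdorffDist_lt hξ'S'
    (by rwa [hausdorffDist_comm] at hH)
    (by rw [EMetric.hausdorffEdist_comm]; exact hedist)
  set p : EuclideanSpace ℝ (Fin n) := (1/2 : ℝ) • (ξ + s) with hp_def
  set q : EuclideanSpace ℝ (Fin n) := (1/2 : ℝ) • (s' + ξ') with hq_def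
  have hpS : p ∈ S := by
    have := hSconv hξS hsS (by norm_num : (0:ℝ) ≤ 1/2) (by norm_num : (0:ℝ) ≤ 1/2)
      (by norm_num)
    rwa [← smul_add] at this
  have hqS' : q ∈ S' := by
    have := hS'conv hs'S' hξ'S' (by norm_num : (0:ℝ) ≤ 1/2) (by norm_num : (0:ℝ) ≤ 1/2)
      (by norm_num)
    rwa [← smul_add] at this
  have hpX : p ∈ X := hSX hpS
  have hqX : q ∈ X := hS'X hqS'
  -- p dominates ξ or ξ'
  have hp : r p ξ ∨ r p ξ' := by
    have hz : ‖(1/2 : ℝ) • (s - ξ')‖ < δ₁ := by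
      rw [norm_smul]
      have : ‖s - ξ'‖ = dist s ξ' := (dist_eq_norm _ _).symm
      rw [this, dist_comm]
      calc |(1/2 : ℝ)| * dist ξ' s ≤ dist ξ' s := by
            rw [abs_of_pos (by norm_num : (0:ℝ) < 1/2)]
            nlinarith [dist_nonneg (x := ξ') (y := s)]
        _ < δ₁ := hsd
    have := hδ₁ ξ' hξ'X hεξ ((1/2 : ℝ) • (s - ξ')) hz
    have heq : (1/2 : ℝ) • (ξ + ξ') + (1/2 : ℝ) • (s - ξ') = p := by
      rw [hp_def]; module
    rwa [heq] at this
  have hq : r q ξ ∨ r q ξ' := by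
    have hz : ‖(1/2 : ℝ) • (s' - ξ)‖ < δ₁ := by
      rw [norm_smul]
      have : ‖s' - ξ‖ = dist s' ξ := (dist_eq_norm _ _).symm
      rw [this, dist_comm]
      calc |(1/2 : ℝ)| * dist ξ s' ≤ dist ξ s' := by
            rw [abs_of_pos (by norm_num : (0:ℝ) < 1/2)]
            nlinarith [dist_nonneg (x := ξ) (y := s')]
        _ < δ₁ := hs'd
    have := hδ₁ ξ' hξ'X hεξ ((1/2 : ℝ) • (s' - ξ)) hz
    have heq : (1/2 : ℝ) • (ξ + ξ') + (1/2 : ℝ) • (s' - ξ) = q := by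
      rw [hq_def]; module
    rwa [heq] at this
  have hpξ' : r p ξ' := hp.resolve_left (hξmax p hpS)
  have hqξ : r q ξ := hq.resolve_right (hξ'max q hqS')
  have hqp : r q p := (negtrans q hqX ξ (hSX hξS) hqξ p hpX).resolve_right (hξmax p hpS)
  have hpq : r p q := (negtrans p hpX ξ' hξ'X hpξ' q hqX).resolve_right (hξ'max q hqS')
  exact asymm p hpX q hqX hpq (hqp)
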